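/- Let A be an h-skew-adjoint ℂ-linear endomorphism of ℂ^{n+1}, let λ ∈ ℝ, and set B = A − iλ·id. Then there exist no vectors e₁, e₂, e₃, e₄ ∈ ℂ^{n+1} with e₁ ≠ 0, B e₁ = 0, B e₂ = e₁, B e₃ = e₂ and B e₄ = e₃; i.e. A has no Jordan block of size greater than 3. -/
import Mathlib

open Complex

/-- The standard hermitian form of signature `(n,1)` on `ℂ^{n+1}`. -/
noncomputable def hForm (n : ℕ) (x y : Fin (n+1) → ℂ) : ℂ :=
  (∑ i : Fin n, x i.castSucc * (starRingEnd ℂ) (y i.castSucc))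
    - x (Fin.last n) * (starRingEnd ℂ) (y (Fin.last n))

def IsHSkewAdjoint (n : ℕ) (A : (Fin (n+1) → ℂ) →ₗ[ℂ] (Fin (n+1) → ℂ)) : Prop :=
  ∀ x y : Fin (n+1) → ℂ, hForm n (A x) y + hForm n x (A y) = 0

lemma hForm_sub_left (n : ℕ) (x x' y : Fin (n+1) → ℂ) :
    hForm n (x - x') y = hForm n x y - hForm n x' y := by
  simp [hForm, sub_mul, Finset.sum_sub_distrib]; ring

lemma hForm_sub_right (n : ℕ) (x y y' : Fin (n+1) → ℂ) :
    hForm n x (y - y') = hForm n x y - hForm n x y' := by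
  simp [hForm, mul_sub, Finset.sum_sub_distrib]; ring

lemma hForm_smul_left (n : ℕ) (c : ℂ) (x y : Fin (n+1) → ℂ) :
    hForm n (c • x) y = c * hForm n x y := by
  simp [hForm, Finset.mul_sum, mul_sub, mul_assoc]

lemma hForm_smul_right (n : ℕ) (c : ℂ) (x y : Fin (n+1) → ℂ) :
    hForm n x (c • y) = (starRingEnd ℂ) c * hForm n x y := by
  simp only [hForm, Pi.smul_apply, smul_eq_mul, map_mul, Finset.mul_sum, mul_sub]
  congr 1
  · apply Finset.sum_congr rfl; intro i _; ring
  · ring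

lemma hForm_zero_left (n : ℕ) (y : Fin (n+1) → ℂ) : hForm n 0 y = 0 := by
  simp [hForm]

lemma hForm_zero_right (n : ℕ) (x : Fin (n+1) → ℂ) : hForm n x 0 = 0 := by
  simp [hForm]

lemma hForm_pos_def (n : ℕ) (w : Fin (n+1) → ℂ) (hlast : w (Fin.last n) = 0)
    (hw : hForm n w w = 0) : w = 0 := by
  have h1 : (∑ i : Fin n, (Complex.normSq (w i.castSucc) : ℂ)) = 0 := by
    have := hw
    simp only [hForm, hlast, mul_zero, zero_mul, sub_zero] at this
    rw [← this]
    apply Finset.sum_congr rfl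
    intro i _
    rw [mul_comm, Complex.normSq_eq_conj_mul_self]
  have h2 : (∑ i : Fin n, Complex.normSq (w i.castSucc)) = 0 := by
    exact_mod_cast h1
  have h3 : ∀ i ∈ Finset.univ, Complex.normSq (w (Fin.castSucc i)) = 0 := by
    rw [← Finset.sum_eq_zero_iff_of_nonneg (fun i _ => Complex.normSq_nonneg _)]
    exact h2
  funext j
  refine Fin.lastCases ?_ ?_ j
  · simpa using hlast
  · intro i
    have := h3 i (Finset.mem_univ i)
    simpa using Complex.normSq_eq_zero.mp this

/-- an `h`-skew-adjoint endomorphism has no Jordan block of size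
greater than `3` for a purely imaginary eigenvalue `iλ`: with
`B = A − iλ·id`, there is no chain `B e₁ = 0, B e₂ = e₁, B e₃ = e₂,
B e₄ = e₃` with `e₁ ≠ 0`. -/
theorem no_jordan_block_size_four (n : ℕ) (hn : 1 ≤ n)
    (A : (Fin (n+1) → ℂ) →ₗ[ℂ] (Fin (n+1) → ℂ)) (hA : IsHSkewAdjoint n A)
    (lam : ℝ) (B : (Fin (n+1) → ℂ) →ₗ[ℂ] (Fin (n+1) → ℂ))
    (hB : B = A - (Complex.I * (lam : ℂ)) • LinearMap.id) :
    ¬ ∃ e₁ e₂ e₃ e₄ : Fin (n+1) → ℂ,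
        e₁ ≠ 0 ∧ B e₁ = 0 ∧ B e₂ = e₁ ∧ B e₃ = e₂ ∧ B e₄ = e₃ := by
  rintro ⟨e₁, e₂, e₃, e₄, hne, h1, h2, h3, h4⟩
  -- B is h-skew-adjoint
  have hBskew : ∀ x y, hForm n (B x) y = - hForm n x (B y) := by
    intro x y
    subst hB
    simp only [LinearMap.sub_apply, LinearMap.smul_apply, LinearMap.id_apply]
    rw [hForm_sub_left, hForm_sub_right, hForm_smul_left, hForm_smul_right]
    have h0 := hA x y
    have hc : (starRingEnd ℂ) (Complex.I * (lam : ℂ)) = -(Complex.I * (lam : ℂ)) := by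
      rw [map_mul, Complex.conj_I, Complex.conj_ofReal]; ring
    rw [hc]
    linear_combination h0
  have h11 : hForm n e₁ e₁ = 0 := by
    have t := hBskew e₂ e₁; rw [h2, h1, hForm_zero_right] at t; simpa using t
  have h12 : hForm n e₁ e₂ = 0 := by
    have t := hBskew e₁ e₃; rw [h1, h3, hForm_zero_left] at t
    exact neg_eq_zero.mp t.symm
  have h21 : hForm n e₂ e₁ = 0 := by
    have t := hBskew e₂ e₂; rw [h2, h12] at t
    exact neg_eq_zero.mp t.symm
  have h13 : hForm n e₁ e₃ = 0 := by
    have t := hBskew e₁ e₄; rw [h1, h4, hForm_zero_left] at t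
    exact neg_eq_zero.mp t.symm
  have h22 : hForm n e₂ e₂ = 0 := by
    have t := hBskew e₂ e₃; rw [h2, h3, h13] at t
    exact neg_eq_zero.mp t.symm
  set c := e₁ (Fin.last n) with hc
  set d := e₂ (Fin.last n) with hd
  by_cases hc0 : c = 0
  · exact hne (hForm_pos_def n e₁ hc0 h11)
  · have hw : c • e₂ - d • e₁ = 0 := by
      apply hForm_pos_def n _ (by simp [hc, hd]; ring)
      simp only [hForm_sub_left, hForm_sub_right, hForm_smul_left, hForm_smul_right,
        h11, h12, h21, h22]
      ring
    have hce : c • e₂ = d • e₁ := sub_eq_zero.mp hw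
    have hz : c • e₁ = 0 := by
      calc c • e₁ = c • B e₂ := by rw [h2]
        _ = B (c • e₂) := by rw [map_smul]
        _ = B (d • e₁) := by rw [hce]
        _ = d • B e₁ := by rw [map_smul]
        _ = 0 := by rw [h1, smul_zero]
    exact hne (by simpa [hc0] using smul_eq_zero.mp hz)
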